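/- Let G be a subset of a nonzero ideal I of S. If G ∩ S⟨n⟩ is a Gröbner base for the ideal I ∩ S⟨n⟩ of S⟨n⟩ for infinitely many integers n, then G is a Gröbner base for I. -/

import Mathlib

open MvPolynomial

noncomputable section

/-- `r` is a monomial order on the monomials (finitely supported exponent vectors):
a well-order compatible with multiplication.  Here `r a b` means `x^a < x^b`. -/
def IsMonomialOrder {σ : Type*} (r : (σ →₀ ℕ) → (σ →₀ ℕ) → Prop) : Prop :=
  IsWellOrder (σ →₀ ℕ) r ∧ ∀ a b c : σ →₀ ℕ, r a b → r (c + a) (c + b)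

/-- `m` is the leading monomial of the polynomial `f` with respect to the order `r`. -/
def IsLM {σ k : Type*} [CommSemiring k] (r : (σ →₀ ℕ) → (σ →₀ ℕ) → Prop)
    (f : MvPolynomial σ k) (m : σ →₀ ℕ) : Prop :=
  m ∈ f.support ∧ ∀ m' ∈ f.support, m' ≠ m → r m' m

/-- `t` is the leading term of `f` with respect to `r`. -/
def IsLT {σ k : Type*} [CommSemiring k] (r : (σ →₀ ℕ) → (σ →₀ ℕ) → Prop)
    (f t : MvPolynomial σ k) : Prop :=
  ∃ m, IsLM r f m ∧ t = monomial m (f.coeff m)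

/-- The initial ideal of `I`: the ideal generated by the leading terms of nonzero elements. -/
def initialIdeal {σ k : Type*} [CommSemiring k] (r : (σ →₀ ℕ) → (σ →₀ ℕ) → Prop)
    (I : Ideal (MvPolynomial σ k)) : Ideal (MvPolynomial σ k) :=
  Ideal.span {t | ∃ f ∈ I, f ≠ 0 ∧ IsLT r f t}

/-- The set of leading monomials (as polynomials) of the nonzero members of `G`: `in(G)`. -/
def lmMonomials {σ k : Type*} [CommSemiring k] (r : (σ →₀ ℕ) → (σ →₀ ℕ) → Prop)
    (G : Set (MvPolynomial σ k)) : Set (MvPolynomial σ k) :=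
  {t | ∃ m, (∃ g ∈ G, g ≠ 0 ∧ IsLM r g m) ∧ t = monomial m 1}

/-- `G ⊆ I` is a Gröbner base for `I`: the leading monomials of members of `G`
generate the initial ideal of `I`. -/
def IsGroebnerBasis {σ k : Type*} [CommSemiring k] (r : (σ →₀ ℕ) → (σ →₀ ℕ) → Prop)
    (G : Set (MvPolynomial σ k)) (I : Ideal (MvPolynomial σ k)) : Prop :=
  G ⊆ ↑I ∧ Ideal.span (lmMonomials r G) = initialIdeal r I

/-- `S⟨n⟩ = k[x₀, …, xₙ₋₁]`, the subalgebra of polynomials in the first `n` variables. -/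
def Sn (k : Type*) [CommSemiring k] (n : ℕ) : Subalgebra k (MvPolynomial ℕ k) :=
  MvPolynomial.supported k {i | i < n}

/-- The initial ideal of an ideal `J` of `S⟨n⟩`, computed inside `S⟨n⟩`
(with the restricted monomial order). -/
def initialIdealIn {k : Type*} [CommSemiring k] (r : (ℕ →₀ ℕ) → (ℕ →₀ ℕ) → Prop)
    (n : ℕ) (J : Ideal ↥(Sn k n)) : Ideal ↥(Sn k n) :=
  Ideal.span {t | ∃ f ∈ J, f ≠ 0 ∧ IsLT r (f : MvPolynomial ℕ k) (t : MvPolynomial ℕ k)}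

/-- The ideal `I ∩ S⟨n⟩` of `S⟨n⟩`. -/
def interIdeal {k : Type*} [CommSemiring k] (I : Ideal (MvPolynomial ℕ k)) (n : ℕ) :
    Ideal ↥(Sn k n) :=
  Ideal.comap (Sn k n).subtype I

/-- A subset `G` of `S` lying in `S⟨n⟩` is a Gröbner base for the ideal `J` of `S⟨n⟩`. -/
def IsGroebnerBasisIn {k : Type*} [CommSemiring k] (r : (ℕ →₀ ℕ) → (ℕ →₀ ℕ) → Prop)
    (n : ℕ) (G : Set (MvPolynomial ℕ k)) (J : Ideal ↥(Sn k n)) : Prop :=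
  (∀ g ∈ G, ∃ hg : g ∈ Sn k n, (⟨g, hg⟩ : ↥(Sn k n)) ∈ J) ∧
  Ideal.span {t : ↥(Sn k n) | ∃ m, (∃ g ∈ G, g ≠ 0 ∧ IsLM r g m) ∧
      (t : MvPolynomial ℕ k) = monomial m 1} = initialIdealIn r n J

/-- `f'` is a remainder of `f` on division by `G` with respect to the order `r`. -/
def IsRemainder {σ k : Type*} [CommSemiring k] (r : (σ →₀ ℕ) → (σ →₀ ℕ) → Prop)
    (G : Set (MvPolynomial σ k)) (f f' : MvPolynomial σ k) : Prop :=
  (∃ (s : ℕ) (g q : Fin s → MvPolynomial σ k),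
    (∀ i, g i ∈ G) ∧
    f = (∑ i, q i * g i) + f' ∧
    ∀ i, q i * g i ≠ 0 → ∀ m m', IsLM r (q i * g i) m → IsLM r f m' → m = m' ∨ r m m') ∧
  ∀ m ∈ f'.support, (monomial m 1 : MvPolynomial σ k) ∉ Ideal.span (lmMonomials r G)

/-- `G` is a reduced Gröbner base for `I`: every member is monic and no leading monomial
of a member divides any term of another member. -/
def IsReducedGB {σ k : Type*} [CommSemiring k] (r : (σ →₀ ℕ) → (σ →₀ ℕ) → Prop)
    (G : Set (MvPolynomial σ k)) (I : Ideal (MvPolynomial σ k)) : Prop :=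
  IsGroebnerBasis r G I ∧
  (∀ g ∈ G, ∃ m, IsLM r g m ∧ MvPolynomial.coeff m g = 1) ∧
  (∀ g ∈ G, ∀ h ∈ G, g ≠ h → ∀ m, IsLM r g m → ∀ m' ∈ h.support, ¬ m ≤ m')

/-- A regular sequence indexed by an ordered set `(Ω, lt)`. -/
def IsRegularSeq {R : Type*} [CommRing R] {Ω : Type*} (lt : Ω → Ω → Prop) (f : Ω → R) : Prop :=
  Ideal.span (Set.range f) ≠ ⊤ ∧
  ∀ α : Ω, ∀ h : R, h * f α ∈ Ideal.span (f '' {β | lt β α}) →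
    h ∈ Ideal.span (f '' {β | lt β α})

/-- The FR-condition: every finite strictly increasing subfamily is a regular sequence
in this order. -/
def SatisfiesFR {R : Type*} [CommRing R] {Ω : Type*} (lt : Ω → Ω → Prop) (f : Ω → R) : Prop :=
  ∀ (n : ℕ) (α : Fin n → Ω), (∀ i j : Fin n, i < j → lt (α i) (α j)) →
    IsRegularSeq (· < ·) (fun i => f (α i))

/-- Corollary 1.6: if `G ∩ S⟨n⟩` is a Gröbner base for `I ∩ S⟨n⟩` (inside `S⟨n⟩`) for
infinitely many integers `n`, then `G` is a Gröbner base for `I`. -/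
theorem isGroebnerBasis_of_infinitely_many {k : Type*} [Field k]
    (r : (ℕ →₀ ℕ) → (ℕ →₀ ℕ) → Prop) (hr : IsMonomialOrder r)
    (I : Ideal (MvPolynomial ℕ k)) (hI : I ≠ ⊥)
    (G : Set (MvPolynomial ℕ k)) (hG : G ⊆ ↑I)
    (h : {n : ℕ | 1 ≤ n ∧
        IsGroebnerBasisIn r n (G ∩ ↑(Sn k n)) (interIdeal I n)}.Infinite) :
    IsGroebnerBasis r G I := by
  refine ⟨hG, le_antisymm ?_ ?_⟩
  · -- easy direction: lm's of G are in initial ideal of I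
    rw [Ideal.span_le]
    rintro t ⟨m, ⟨g, hgG, hg0, hlm⟩, rfl⟩
    have hc : g.coeff m ≠ 0 := MvPolynomial.mem_support_iff.mp hlm.1
    have hgen : (monomial m (g.coeff m) : MvPolynomial ℕ k) ∈ initialIdeal r I :=
      Ideal.subset_span ⟨g, hG hgG, hg0, m, hlm, rfl⟩
    have : (monomial m 1 : MvPolynomial ℕ k) = C (g.coeff m)⁻¹ * monomial m (g.coeff m) := by
      rw [C_mul_monomial, inv_mul_cancel₀ hc]
    rw [this]
    exact Ideal.mul_mem_left _ _ hgen
  · -- hard direction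
    rw [initialIdeal, Ideal.span_le]
    rintro t ⟨f, hfI, hf0, m, hlm, rfl⟩
    -- find n in the set large enough that f ∈ Sn k n
    obtain ⟨n, hn, hNn⟩ := h.exists_gt (f.vars.sup id)
    obtain ⟨-, hGsub, hGB⟩ := hn
    have hvars : ↑f.vars ⊆ {i | i < n} := by
      intro i hi
      exact lt_of_le_of_lt (Finset.le_sup (f := id) (by exact_mod_cast hi)) hNn
    have hfSn : f ∈ Sn k n := (MvPolynomial.mem_supported).mpr hvars
    have hc : f.coeff m ≠ 0 := MvPolynomial.mem_support_iff.mp hlm.1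
    have htSn : (monomial m (f.coeff m) : MvPolynomial ℕ k) ∈ Sn k n := by
      rw [Sn, MvPolynomial.mem_supported, MvPolynomial.vars_monomial hc]
      intro i hi
      apply hvars
      rw [Finset.mem_coe, MvPolynomial.mem_vars]
      exact ⟨m, hlm.1, by exact_mod_cast hi⟩
    set fSn : ↥(Sn k n) := ⟨f, hfSn⟩ with hfSndef
    set tSn : ↥(Sn k n) := ⟨monomial m (f.coeff m), htSn⟩ with htSndef
    have hfJ : fSn ∈ interIdeal I n := by
      rw [interIdeal, Ideal.mem_comap]
      exact hfI
    have hgen : tSn ∈ initialIdealIn r n (interIdeal I n) := by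
      refine Ideal.subset_span ⟨fSn, hfJ, ?_, m, hlm, rfl⟩
      intro hcontra
      exact hf0 (congrArg (Subtype.val) hcontra)
    rw [← hGB] at hgen
    have hmap : (tSn : MvPolynomial ℕ k) ∈
        Ideal.map (Sn k n).subtype (Ideal.span {t : ↥(Sn k n) | ∃ m,
          (∃ g ∈ G ∩ ↑(Sn k n), g ≠ 0 ∧ IsLM r g m) ∧
          (t : MvPolynomial ℕ k) = monomial m 1}) :=
      Ideal.mem_map_of_mem _ hgen
    rw [Ideal.map_span] at hmap
    refine Ideal.span_mono ?_ hmap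
    rintro x ⟨y, ⟨m', ⟨g, ⟨hgG, _⟩, hg0, hlm'⟩, hy⟩, rfl⟩
    exact ⟨m', ⟨g, hgG, hg0, hlm'⟩, by simpa using hy⟩

end
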